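/- Let D be an integral domain with quotient field K and let S be a set of monic polynomials of degree n in D[X]. Then Int(M_n^S(D)) = Int(C_n^S(D)), where C_n^S(D) = {C_p : p ∈ S} is the set of companion matrices of the polynomials in S; that is, a polynomial f ∈ K[X] satisfies f(M) ∈ M_n(D) for every matrix M with characteristic polynomial in S if and only if f(C_p) ∈ M_n(D) for every p ∈ S. -/

import Mathlib

/-- The companion matrix of a monic polynomial `p` of degree `n`: ones on the subdiagonal
and `-p.coeff i` as the `i`-th entry of the last column. -/
def companionMatrix {D : Type*} [CommRing D] (n : ℕ) (p : Polynomial D) :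
    Matrix (Fin n) (Fin n) D :=
  Matrix.of fun i j =>
    if (j : ℕ) = n - 1 then -p.coeff i else if (i : ℕ) = (j : ℕ) + 1 then 1 else 0

open Polynomial Matrix Finset


lemma companion_pow_entry {R : Type*} [CommRing R] {n : ℕ} (p : Polynomial R) (hn : 0 < n) :
    ∀ k, k < n → ∀ i : Fin n,
      ((companionMatrix n p) ^ k) i ⟨0, hn⟩ = if (i : ℕ) = k then 1 else 0 := by
  intro k
  induction k with
  | zero =>
      intro _ i
      rw [pow_zero, Matrix.one_apply]
      simp [Fin.ext_iff]
  | succ k ih =>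
      intro hk i
      have hk' : k < n := Nat.lt_of_succ_lt hk
      rw [pow_succ', Matrix.mul_apply]
      have key : ∀ j : Fin n, companionMatrix n p i j * ((companionMatrix n p) ^ k) j ⟨0, hn⟩
          = if j = (⟨k, hk'⟩ : Fin n) then companionMatrix n p i j else 0 := by
        intro j
        rw [ih hk' j]
        by_cases hj : (j : ℕ) = k
        · simp [hj, Fin.ext_iff]
        · simp [hj, Fin.ext_iff]
      rw [Finset.sum_congr rfl fun j _ => key j, Finset.sum_ite_eq' Finset.univ,
        if_pos (Finset.mem_univ _)]
      have hkne : ¬ (k = n - 1) := by omega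
      simp [companionMatrix, hkne]

lemma companion_pow_n {R : Type*} [CommRing R] {n : ℕ} (p : Polynomial R) (hn : 0 < n)
    (i : Fin n) : ((companionMatrix n p) ^ n) i ⟨0, hn⟩ = -p.coeff i := by
  obtain ⟨m, rfl⟩ : ∃ m, n = m + 1 := ⟨n - 1, (Nat.succ_pred_eq_of_pos hn).symm⟩
  rw [pow_succ', Matrix.mul_apply]
  have key : ∀ j : Fin (m+1), companionMatrix (m+1) p i j *
        ((companionMatrix (m+1) p) ^ m) j ⟨0, hn⟩
      = if j = (⟨m, Nat.lt_succ_self m⟩ : Fin (m+1)) then companionMatrix (m+1) p i j else 0 := by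
    intro j
    rw [companion_pow_entry p hn m (Nat.lt_succ_self m) j]
    by_cases hj : (j : ℕ) = m
    · simp [hj, Fin.ext_iff]
    · simp [hj, Fin.ext_iff]
  rw [Finset.sum_congr rfl fun j _ => key j, Finset.sum_ite_eq' Finset.univ,
    if_pos (Finset.mem_univ _)]
  simp [companionMatrix]

lemma aeval_companion_entry {R : Type*} [CommRing R] {n : ℕ} (p q : Polynomial R) (hn : 0 < n)
    (hq : q.natDegree < n) (i : Fin n) :
    (Polynomial.aeval (companionMatrix n p) q) i ⟨0, hn⟩ = q.coeff i := by
  rw [Polynomial.aeval_eq_sum_range' hq]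
  rw [Matrix.sum_apply]
  have : ∀ k ∈ Finset.range n,
      (q.coeff k • (companionMatrix n p) ^ k) i ⟨0, hn⟩
        = if (i : ℕ) = k then q.coeff k else 0 := by
    intro k hk
    rw [Matrix.smul_apply, companion_pow_entry p hn k (Finset.mem_range.mp hk) i]
    by_cases h : (i : ℕ) = k <;> simp [h]
  rw [Finset.sum_congr rfl this, Finset.sum_ite_eq, if_pos (Finset.mem_range.mpr i.isLt)]

lemma natDegree_sub_lt_of_monic {R : Type*} [CommRing R] [Nontrivial R] {n : ℕ} (hn : 0 < n)
    {a b : Polynomial R} (ha : a.Monic) (hb : b.Monic)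
    (hda : a.natDegree = n) (hdb : b.natDegree = n) : (a - b).natDegree < n := by
  by_cases h : a = b
  · simpa [h] using hn
  · have hdeg : a.degree = b.degree := by
      rw [degree_eq_natDegree ha.ne_zero, degree_eq_natDegree hb.ne_zero, hda, hdb]
    have := Polynomial.degree_sub_lt hdeg ha.ne_zero (by rw [ha.leadingCoeff, hb.leadingCoeff])
    have := Polynomial.natDegree_lt_natDegree (sub_ne_zero.mpr h) this
    omega

lemma aeval_companion_self {R : Type*} [CommRing R] [Nontrivial R] {n : ℕ} (hn : 0 < n) {p : Polynomial R}
    (hm : p.Monic) (hd : p.natDegree = n) (i : Fin n) :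
    (Polynomial.aeval (companionMatrix n p) p) i ⟨0, hn⟩ = 0 := by
  have hX : ((X : Polynomial R) ^ n).Monic := monic_X_pow n
  have hdX : ((X : Polynomial R) ^ n).natDegree = n := natDegree_X_pow n
  have hlt : (p - X ^ n).natDegree < n := natDegree_sub_lt_of_monic hn hm hX hd hdX
  have h1 : p = (p - X ^ n) + X ^ n := by ring
  nth_rewrite 2 [h1]
  rw [map_add, Matrix.add_apply, map_pow, aeval_X,
    aeval_companion_entry p _ hn hlt i, companion_pow_n p hn i]
  have : (p - X ^ n).coeff i = p.coeff i := by
    have hi : (i : ℕ) ≠ n := by omega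
    simp [coeff_sub, coeff_X_pow, hi]
  rw [this]; ring

lemma charpoly_companion {R : Type*} [CommRing R] [Nontrivial R] {n : ℕ} (hn : 0 < n)
    {p : Polynomial R} (hm : p.Monic) (hd : p.natDegree = n) :
    (companionMatrix n p).charpoly = p := by
  set q := (companionMatrix n p).charpoly with hq
  have hqm : q.Monic := Matrix.charpoly_monic _
  have hqd : q.natDegree = n := by
    rw [hq, Matrix.charpoly_natDegree_eq_dim, Fintype.card_fin]
  have hlt : (q - p).natDegree < n := natDegree_sub_lt_of_monic hn hqm hm hqd hd
  have key : ∀ i : Fin n, (q - p).coeff i = 0 := by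
    intro i
    have := aeval_companion_entry p (q - p) hn hlt i
    rw [map_sub, Matrix.sub_apply, Matrix.aeval_self_charpoly,
      aeval_companion_self hn hm hd i] at this
    simpa using this.symm
  have : q - p = 0 := by
    ext m
    rw [coeff_zero]
    by_cases hmn : m < n
    · simpa using key ⟨m, hmn⟩
    · exact coeff_eq_zero_of_natDegree_lt (by omega)
  have := sub_eq_zero.mp this
  rw [hq] at this; exact this

lemma companionMatrix_map {R S : Type*} [CommRing R] [CommRing S] (φ : R →+* S) (n : ℕ)
    (p : Polynomial R) :
    (companionMatrix n p).map φ = companionMatrix n (p.map φ) := by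
  ext i j
  simp [companionMatrix, Matrix.map_apply, apply_ite φ, Polynomial.coeff_map]

/-- Let `D` be an integral domain with quotient field `K` and let `S` be a
set of monic polynomials of degree `n` in `D[X]`.  Then `Int(M_n^S(D)) = Int(C_n^S(D))`:
a polynomial `f ∈ K[X]` satisfies `f(M) ∈ M_n(D)` for every matrix `M ∈ M_n(D)` with
characteristic polynomial in `S` if and only if `f(C_p) ∈ M_n(D)` for every `p ∈ S`,
where `C_p` is the companion matrix of `p` (values are computed in `M_n(K)`). -/
theorem stmt_7 (D : Type*) [CommRing D] [IsDomain D] (K : Type*) [Field K]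
    [Algebra D K] [IsFractionRing D K] (n : ℕ) (S : Set (Polynomial D))
    (hS : ∀ p ∈ S, p.Monic ∧ p.natDegree = n) :
    {f : Polynomial K | ∀ M : Matrix (Fin n) (Fin n) D, M.charpoly ∈ S → ∀ i j : Fin n,
        (Polynomial.aeval (M.map (algebraMap D K)) f) i j ∈ (algebraMap D K).range} =
      {f : Polynomial K | ∀ p ∈ S, ∀ i j : Fin n,
        (Polynomial.aeval ((companionMatrix n p).map (algebraMap D K)) f) i j
          ∈ (algebraMap D K).range} := by

  have Φdef : ∀ M : Matrix (Fin n) (Fin n) D,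
      M.map (algebraMap D K) = (AlgHom.mapMatrix (Algebra.ofId D K)) M := by
    intro M; rfl
  have haeval0 : ∀ M : Matrix (Fin n) (Fin n) D,
      Polynomial.aeval (M.map (algebraMap D K)) (M.charpoly.map (algebraMap D K)) = 0 := by
    intro M
    rw [Polynomial.aeval_map_algebraMap, Φdef,
      Polynomial.aeval_algHom_apply, Matrix.aeval_self_charpoly, map_zero]
  ext f
  simp only [Set.mem_setOf_eq]
  constructor
  · intro h p hp i j
    have hn : 0 < n := i.pos
    obtain ⟨hm, hd⟩ := hS p hp
    exact h (companionMatrix n p) (by rw [charpoly_companion hn hm hd]; exact hp) i j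
  · intro h M hM i j
    have hn : 0 < n := i.pos
    obtain ⟨hm, hd⟩ := hS _ hM
    set φ := algebraMap D K with hφ
    set p := M.charpoly with hpdef
    have hm' : (p.map φ).Monic := hm.map φ
    have hd' : (p.map φ).natDegree = n := by rw [hm.natDegree_map]; exact hd
    set r := f %ₘ (p.map φ) with hr
    have hrdeg : r.natDegree < n := by
      by_cases h0 : r = 0
      · simpa [h0] using hn
      · have := Polynomial.degree_modByMonic_lt f hm'
        rw [degree_eq_natDegree h0, degree_eq_natDegree hm'.ne_zero] at this
        exact_mod_cast (by exact_mod_cast this : r.natDegree < (p.map φ).natDegree).trans_le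
          hd'.le
    -- f agrees with r after evaluating at any matrix killing p.map φ
    have hsplit : ∀ A : Matrix (Fin n) (Fin n) K,
        Polynomial.aeval A (p.map φ) = 0 → Polynomial.aeval A f = Polynomial.aeval A r := by
      intro A hA
      conv_lhs => rw [← Polynomial.modByMonic_add_div f (p.map φ)]
      rw [map_add, _root_.map_mul, hA, zero_mul, add_zero]
    -- companion matrix evaluation
    have hcomp : Polynomial.aeval ((companionMatrix n p).map φ) (p.map φ) = 0 := by
      rw [companionMatrix_map]
      nth_rewrite 2 [← charpoly_companion hn hm' hd']
      exact Matrix.aeval_self_charpoly _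
    have hcoeff : ∀ m : ℕ, r.coeff m ∈ Set.range φ := by
      intro m
      by_cases hmn : m < n
      · have h1 := h p hM ⟨m, hmn⟩ ⟨0, hn⟩
        rw [hsplit _ hcomp, companionMatrix_map,
          aeval_companion_entry (p.map φ) r hn hrdeg ⟨m, hmn⟩] at h1
        exact h1
      · rw [Polynomial.coeff_eq_zero_of_natDegree_lt (by omega)]
        exact ⟨0, map_zero φ⟩
    have hlift : r ∈ Polynomial.lifts φ := (Polynomial.lifts_iff_coeff_lifts r).mpr hcoeff
    obtain ⟨r₀, hr₀⟩ := (Polynomial.mem_lifts r).mp hlift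
    rw [hsplit _ (haeval0 M), ← hr₀, Polynomial.aeval_map_algebraMap, Φdef,
      Polynomial.aeval_algHom_apply]
    exact ⟨(Polynomial.aeval M r₀) i j, rfl⟩
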